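/- Let ζ ∈ (1, 2] and let h : [0,1] × ℝ → ℝ be a continuous function such that (i) for each t ∈ [0,1], the map x ↦ h(t,x) is nondecreasing, and (ii) there exists α ∈ (0,1) such that for all t ∈ [0,1] and all x, y ∈ ℝ with x ≤ y, |h(t,x) − h(t,y)| ≤ (α Γ(ζ+1)/4) |x − y|, where Γ denotes the Gamma function. Define the operator T on the space C([0,1], ℝ) of continuous real-valued functions on [0,1] by (T u)(t) = (1/Γ(ζ)) ∫₀ᵗ (t − s)^{ζ−1} h(s, u(s)) ds + (2t/Γ(ζ)) ∫₀¹ ( ∫₀ˢ (s − m)^{ζ−1} h(m, u(m)) dm ) ds. Then there exists u ∈ C([0,1], ℝ) with T u = u; that is, the nonlinear fractional boundary value problem D^ζ f(t) = h(t, f(t)) with f(0) = 0 and I f(1) = f'(0) admits a solution in C([0,1], ℝ). -/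

import Mathlib

open Real Set MeasureTheory intervalIntegral

/-- The integral operator associated with the Caputo fractional boundary value
problem `D^ζ f(t) = h(t, f(t))`, `f(0) = 0`, `I f(1) = f'(0)`:
`(T u)(t) = (1/Γ(ζ)) ∫₀ᵗ (t−s)^{ζ−1} h(s,u(s)) ds
  + (2t/Γ(ζ)) ∫₀¹ (∫₀ˢ (s−m)^{ζ−1} h(m,u(m)) dm) ds`. -/
noncomputable def fracOp (ζ : ℝ) (h : ℝ → ℝ → ℝ) (u : ℝ → ℝ) : ℝ → ℝ :=
  fun t =>
    (1 / Real.Gamma ζ) * ∫ s in (0 : ℝ)..t, (t - s) ^ (ζ - 1) * h s (u s) +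
      (2 * t / Real.Gamma ζ) *
        ∫ s in (0 : ℝ)..1, ∫ m in (0 : ℝ)..s, (s - m) ^ (ζ - 1) * h m (u m)

/-- Basic bound: `|∫₀ᵗ (t-s)^{ζ-1} g s ds| ≤ C t^ζ / ζ` when `|g| ≤ C` on `[0,1]`. -/
lemma frac_bound {ζ : ℝ} (hζ1 : 1 < ζ) {g : ℝ → ℝ} (hg : Continuous g)
    {C : ℝ} (hgb : ∀ s ∈ Icc (0:ℝ) 1, |g s| ≤ C) {t : ℝ} (ht : t ∈ Icc (0:ℝ) 1) :
    |∫ s in (0:ℝ)..t, (t - s) ^ (ζ - 1) * g s| ≤ C * t ^ ζ / ζ := by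
  have hζ0 : 0 < ζ := by linarith
  have hcrp : Continuous fun x : ℝ => x ^ (ζ - 1) :=
    Real.continuous_rpow_const (by linarith)
  have hker : Continuous fun s : ℝ => (t - s) ^ (ζ - 1) :=
    hcrp.comp (continuous_const.sub continuous_id)
  have hC0 : 0 ≤ C := le_trans (abs_nonneg _) (hgb 0 (by norm_num))
  calc |∫ s in (0:ℝ)..t, (t - s) ^ (ζ - 1) * g s|
      ≤ ∫ s in (0:ℝ)..t, |(t - s) ^ (ζ - 1) * g s| :=
        intervalIntegral.abs_integral_le_integral_abs ht.1
    _ ≤ ∫ s in (0:ℝ)..t, (t - s) ^ (ζ - 1) * C := by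
        apply intervalIntegral.integral_mono_on ht.1
          ((hker.mul hg).abs.intervalIntegrable _ _)
          ((hker.mul continuous_const).intervalIntegrable _ _)
        intro x hx
        simp only [Pi.mul_apply]
        rw [abs_mul, abs_of_nonneg (Real.rpow_nonneg (by linarith [hx.2] : (0:ℝ) ≤ t - x) _)]
        exact mul_le_mul_of_nonneg_left (hgb x ⟨hx.1, hx.2.trans ht.2⟩)
          (Real.rpow_nonneg (by linarith [hx.2]) _)
    _ = (∫ s in (0:ℝ)..t, (t - s) ^ (ζ - 1)) * C := by
        rw [intervalIntegral.integral_mul_const]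
    _ = (t ^ ζ / ζ) * C := by
        rw [show (∫ s in (0:ℝ)..t, (t - s) ^ (ζ - 1))
            = ∫ s in t - t..t - 0, s ^ (ζ - 1) from
          intervalIntegral.integral_comp_sub_left (fun x => x ^ (ζ - 1)) t]
        rw [sub_self, sub_zero, integral_rpow (Or.inl (by linarith))]
        have hz : ζ - 1 + 1 = ζ := by ring
        rw [hz, Real.zero_rpow hζ0.ne', sub_zero]
    _ = C * t ^ ζ / ζ := by ring

/-- Existence of a solution of the nonlinear fractional boundary value problem:
if `h` is continuous on `[0,1] × ℝ`, nondecreasing in its second variable, and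
satisfies `|h(t,x) − h(t,y)| ≤ (α Γ(ζ+1)/4)|x − y|` for comparable `x ≤ y`,
then the operator `T` has a fixed point in `C([0,1], ℝ)`. -/
theorem frac_bvp_has_solution (ζ : ℝ) (hζ : ζ ∈ Set.Ioc (1 : ℝ) 2)
    (h : ℝ → ℝ → ℝ)
    (h_cont : ContinuousOn (Function.uncurry h) (Set.Icc (0 : ℝ) 1 ×ˢ Set.univ))
    (h_mono : ∀ t ∈ Set.Icc (0 : ℝ) 1, Monotone (h t))
    (α : ℝ) (hα : α ∈ Set.Ioo (0 : ℝ) 1)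
    (h_lip : ∀ t ∈ Set.Icc (0 : ℝ) 1, ∀ x y : ℝ, x ≤ y →
      |h t x - h t y| ≤ α * Real.Gamma (ζ + 1) / 4 * |x - y|) :
    ∃ u : ℝ → ℝ, ContinuousOn u (Set.Icc (0 : ℝ) 1) ∧
      ∀ t ∈ Set.Icc (0 : ℝ) 1, fracOp ζ h u t = u t := by
  obtain ⟨hζ1, hζ2⟩ := hζ
  obtain ⟨hα0, hα1⟩ := hα
  have hζ0 : 0 < ζ := by linarith
  have le01 : (0:ℝ) ≤ 1 := zero_le_one
  have hΓpos : 0 < Real.Gamma ζ := Real.Gamma_pos_of_pos hζ0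
  have hΓ1 : Real.Gamma (ζ + 1) = ζ * Real.Gamma ζ := Real.Gamma_add_one hζ0.ne'
  have hΓ1pos : 0 < Real.Gamma (ζ + 1) := Real.Gamma_pos_of_pos (by linarith)
  have hcrp : Continuous fun x : ℝ => x ^ (ζ - 1) :=
    Real.continuous_rpow_const (by linarith)
  -- Lower bound `Γ ζ ≥ 1/3` via the Euler integral.
  have hΓlow : (1/3 : ℝ) ≤ Real.Gamma ζ := by
    have hint0 : IntegrableOn (fun x : ℝ => Real.exp (-x) * x ^ (ζ - 1)) (Ioi 0) :=
      Real.GammaIntegral_convergent hζ0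
    have hint1 : IntegrableOn (fun x : ℝ => Real.exp (-x) * x ^ (ζ - 1)) (Ioi 1) :=
      hint0.mono_set (Ioi_subset_Ioi le01)
    have hexpint : IntegrableOn (fun x : ℝ => Real.exp (-x)) (Ioi 1) := by
      have := exp_neg_integrableOn_Ioi 1 (b := 1) one_pos
      simpa using this
    calc (1/3 : ℝ) ≤ Real.exp (-1) := by
          rw [Real.exp_neg]
          rw [div_le_iff₀ (by norm_num : (0:ℝ) < 3)]
          rw [inv_mul_eq_div, le_div_iff₀ (Real.exp_pos 1)]
          nlinarith [Real.exp_one_lt_d9]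
      _ = ∫ x in Ioi (1:ℝ), Real.exp (-x) := (integral_exp_neg_Ioi 1).symm
      _ ≤ ∫ x in Ioi (1:ℝ), Real.exp (-x) * x ^ (ζ - 1) := by
          apply setIntegral_mono_on hexpint hint1 measurableSet_Ioi
          intro x hx
          have hx1 : (1:ℝ) ≤ x := le_of_lt hx
          nth_rewrite 1 [← mul_one (Real.exp (-x))]
          apply mul_le_mul_of_nonneg_left _ (Real.exp_pos _).le
          calc (1:ℝ) = 1 ^ (ζ - 1) := (Real.one_rpow _).symm
            _ ≤ x ^ (ζ - 1) := Real.rpow_le_rpow le01 hx1 (by linarith)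
      _ ≤ ∫ x in Ioi (0:ℝ), Real.exp (-x) * x ^ (ζ - 1) := by
          apply setIntegral_mono_set hint0
          · filter_upwards [ae_restrict_mem measurableSet_Ioi] with x hx
            have : (0:ℝ) < x := hx
            positivity
          · exact HasSubset.Subset.eventuallyLE (Ioi_subset_Ioi le01)
      _ = Real.Gamma ζ := (Real.Gamma_eq_integral hζ0).symm
  set L : ℝ := α * Real.Gamma (ζ + 1) / 4 with hLdef
  have hL0 : 0 ≤ L := by positivity
  -- Setup: projection onto `[0,1]` and the substituted nonlinearity.
  set pr : ℝ → Icc (0:ℝ) 1 := fun s => projIcc 0 1 le01 s with hprdef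
  have hprcont : Continuous pr := continuous_projIcc
  set H : C(Icc (0:ℝ) 1, ℝ) → ℝ → ℝ := fun u s => h (pr s : ℝ) (u (pr s)) with hHdef
  have hHcont : ∀ u : C(Icc (0:ℝ) 1, ℝ), Continuous (H u) := by
    intro u
    have hc : Continuous fun s : ℝ => (((pr s : ℝ)), u (pr s)) :=
      (continuous_subtype_val.comp hprcont).prodMk (u.continuous.comp hprcont)
    exact h_cont.comp_continuous hc fun s => Set.mem_prod.mpr ⟨(pr s).2, mem_univ _⟩
  have hHeq : ∀ (u : C(Icc (0:ℝ) 1, ℝ)) (s : ℝ), s ∈ Icc (0:ℝ) 1 →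
      H u s = h s (IccExtend le01 u s) := by
    intro u s hs
    simp only [hHdef, hprdef, IccExtend, Function.comp]
    rw [projIcc_of_mem le01 hs]
  have hHlip : ∀ (u v : C(Icc (0:ℝ) 1, ℝ)) (s : ℝ), |H u s - H v s| ≤ L * dist u v := by
    intro u v s
    have hp : ((pr s : ℝ)) ∈ Icc (0:ℝ) 1 := (pr s).2
    have hdle : |u (pr s) - v (pr s)| ≤ dist u v := by
      rw [← Real.dist_eq]; exact ContinuousMap.dist_apply_le_dist _
    rcases le_total (u (pr s)) (v (pr s)) with hc | hc
    · exact le_trans (h_lip _ hp _ _ hc) (mul_le_mul_of_nonneg_left hdle hL0)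
    · rw [abs_sub_comm]
      refine le_trans (h_lip _ hp _ _ hc) ?_
      rw [abs_sub_comm]
      exact mul_le_mul_of_nonneg_left hdle hL0
  -- The basic integral transform and its continuity.
  set Gfun : (ℝ → ℝ) → ℝ → ℝ :=
    fun g t => ∫ m in (0:ℝ)..t, (t - m) ^ (ζ - 1) * g m with hGdef
  have hGcont : ∀ g : ℝ → ℝ, Continuous g → Continuous (Gfun g) := by
    intro g hg
    have hu : Continuous (Function.uncurry fun t m : ℝ => (t - m) ^ (ζ - 1) * g m) :=
      (hcrp.comp (continuous_fst.sub continuous_snd)).mul (hg.comp continuous_snd)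
    exact intervalIntegral.continuous_parametric_intervalIntegral_of_continuous hu continuous_id
  have hGsub : ∀ (g₁ g₂ : ℝ → ℝ), Continuous g₁ → Continuous g₂ → ∀ w : ℝ,
      Gfun g₁ w - Gfun g₂ w = Gfun (fun s => g₁ s - g₂ s) w := by
    intro g₁ g₂ hg₁ hg₂ w
    have hkw : Continuous fun m : ℝ => (w - m) ^ (ζ - 1) :=
      hcrp.comp (continuous_const.sub continuous_id)
    simp only [hGdef]
    rw [← intervalIntegral.integral_sub (f := fun m => (w - m) ^ (ζ - 1) * g₁ m)
      (g := fun m => (w - m) ^ (ζ - 1) * g₂ m) ((hkw.mul hg₁).intervalIntegrable _ _)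
      ((hkw.mul hg₂).intervalIntegrable _ _)]
    apply intervalIntegral.integral_congr
    intro x _
    ring
  -- The constant (in `t`) part of the operator.
  set c : C(Icc (0:ℝ) 1, ℝ) → ℝ := fun u => ∫ s in (0:ℝ)..1, Gfun (H u) s with hcdef
  -- The operator itself.
  set op : C(Icc (0:ℝ) 1, ℝ) → ℝ → ℝ := fun u t =>
    (1 / Real.Gamma ζ) * (Gfun (H u) t + t * (2 * t / Real.Gamma ζ * c u)) with hopdef
  have hopcont : ∀ u, Continuous (op u) := by
    intro u
    apply continuous_const.mul
    exact (hGcont _ (hHcont u)).add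
      (continuous_id.mul ((continuous_const.mul continuous_id).div_const _ |>.mul continuous_const))
  set F : C(Icc (0:ℝ) 1, ℝ) → C(Icc (0:ℝ) 1, ℝ) := fun u =>
    ⟨fun t => op u t, (hopcont u).comp continuous_subtype_val⟩ with hFdef
  -- The contraction estimate.
  have key : ∀ u v : C(Icc (0:ℝ) 1, ℝ), ∀ t : Icc (0:ℝ) 1,
      |op u t - op v t| ≤ α * dist u v := by
    intro u v t
    set d := dist u v with hd
    have hd0 : 0 ≤ d := dist_nonneg
    set g : ℝ → ℝ := fun s => H u s - H v s with hgdef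
    have hgc : Continuous g := (hHcont u).sub (hHcont v)
    have hgb : ∀ s ∈ Icc (0:ℝ) 1, |g s| ≤ L * d := fun s _ => hHlip u v s
    have ht : (t:ℝ) ∈ Icc (0:ℝ) 1 := t.2
    have htrp : ((t:ℝ)) ^ ζ ≤ 1 := Real.rpow_le_one ht.1 ht.2 hζ0.le
    have e1 : |Gfun g t| ≤ L * d / ζ := by
      refine le_trans (frac_bound hζ1 hgc hgb ht) ?_
      calc L * d * ((t:ℝ)) ^ ζ / ζ ≤ L * d * 1 / ζ := by gcongr
        _ = L * d / ζ := by ring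
    have e2 : |c u - c v| ≤ L * d / (ζ * (ζ + 1)) := by
      have hsub : c u - c v = ∫ s in (0:ℝ)..1, Gfun g s := by
        simp only [hcdef]
        rw [← intervalIntegral.integral_sub ((hGcont _ (hHcont u)).intervalIntegrable _ _)
          ((hGcont _ (hHcont v)).intervalIntegrable _ _)]
        apply intervalIntegral.integral_congr
        intro s _
        exact hGsub _ _ (hHcont u) (hHcont v) s
      rw [hsub]
      calc |∫ s in (0:ℝ)..1, Gfun g s| ≤ ∫ s in (0:ℝ)..1, |Gfun g s| :=
            intervalIntegral.abs_integral_le_integral_abs le01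
        _ ≤ ∫ s in (0:ℝ)..1, L * d / ζ * s ^ ζ := by
            apply intervalIntegral.integral_mono_on le01
              ((hGcont g hgc).abs.intervalIntegrable _ _)
              ((continuous_const.mul (Real.continuous_rpow_const hζ0.le)).intervalIntegrable _ _)
            intro s hs
            refine le_trans (frac_bound hζ1 hgc hgb hs) (le_of_eq ?_)
            simp only [Pi.mul_apply]
            ring
        _ = L * d / ζ * ∫ s in (0:ℝ)..1, s ^ ζ := by
            rw [intervalIntegral.integral_const_mul]
        _ = L * d / ζ * (1 / (ζ + 1)) := by
            rw [integral_rpow (Or.inl (by linarith))]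
            rw [Real.one_rpow, Real.zero_rpow (by linarith : ζ + 1 ≠ 0), sub_zero]
        _ = L * d / (ζ * (ζ + 1)) := by
            rw [div_mul_div_comm, mul_one]
    have hsplit : op u t - op v t =
        (1 / Real.Gamma ζ) * (Gfun g (t:ℝ) +
          (t:ℝ) * (2 * (t:ℝ) / Real.Gamma ζ * (c u - c v))) := by
      simp only [hopdef]
      rw [← hGsub _ _ (hHcont u) (hHcont v) (t:ℝ)]
      ring
    have htabs : |(t:ℝ)| ≤ 1 := abs_le.mpr ⟨by linarith [ht.1], ht.2⟩
    calc |op u t - op v t|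
        = (1 / Real.Gamma ζ) * |Gfun g (t:ℝ) +
            (t:ℝ) * (2 * (t:ℝ) / Real.Gamma ζ * (c u - c v))| := by
          rw [hsplit, abs_mul, abs_of_pos (by positivity : (0:ℝ) < 1 / Real.Gamma ζ)]
      _ ≤ (1 / Real.Gamma ζ) * (|Gfun g (t:ℝ)| +
            |(t:ℝ)| * (2 * |(t:ℝ)| / Real.Gamma ζ * |c u - c v|)) := by
          apply mul_le_mul_of_nonneg_left _ (by positivity)
          refine le_trans (abs_add_le _ _) ?_
          apply add_le_add le_rfl
          rw [abs_mul, abs_mul, abs_div, abs_mul, abs_two,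
            abs_of_pos hΓpos]
      _ ≤ (1 / Real.Gamma ζ) * (L * d / ζ +
            1 * (2 * 1 / Real.Gamma ζ * (L * d / (ζ * (ζ + 1))))) := by
          apply mul_le_mul_of_nonneg_left _ (by positivity)
          apply add_le_add e1
          have h1 : 2 * |(t:ℝ)| / Real.Gamma ζ * |c u - c v| ≤
              2 * 1 / Real.Gamma ζ * (L * d / (ζ * (ζ + 1))) := by
            apply mul_le_mul _ e2 (abs_nonneg _) (by positivity)
            gcongr
          calc |(t:ℝ)| * (2 * |(t:ℝ)| / Real.Gamma ζ * |c u - c v|) ≤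
              1 * (2 * |(t:ℝ)| / Real.Gamma ζ * |c u - c v|) := by
                apply mul_le_mul_of_nonneg_right htabs (by positivity)
            _ ≤ 1 * (2 * 1 / Real.Gamma ζ * (L * d / (ζ * (ζ + 1)))) := by
                rw [one_mul, one_mul]; exact h1
      _ ≤ α * d := by
          have hexp : (1 / Real.Gamma ζ) * (L * d / ζ +
              1 * (2 * 1 / Real.Gamma ζ * (L * d / (ζ * (ζ + 1))))) =
              α * d / 4 * (1 + 2 / (Real.Gamma ζ * (ζ + 1))) := by
            rw [hLdef, hΓ1]
            field_simp
          rw [hexp]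
          have h2 : 2 / (Real.Gamma ζ * (ζ + 1)) ≤ 3 := by
            rw [div_le_iff₀ (by positivity)]
            nlinarith [hΓlow]
          nlinarith [mul_nonneg hα0.le hd0]
  -- `F` is a contraction.
  have hlipF : LipschitzWith ⟨α, hα0.le⟩ F := by
    apply LipschitzWith.of_dist_le_mul
    intro u v
    rw [ContinuousMap.dist_le (by positivity)]
    intro x
    rw [Real.dist_eq]
    exact key u v x
  have hcontr : ContractingWith ⟨α, hα0.le⟩ F := by
    constructor
    · exact_mod_cast hα1
    · exact hlipF
  -- Extract the fixed point.
  set u₀ := ContractingWith.fixedPoint F hcontr with hu₀def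
  have hfix : F u₀ = u₀ := hcontr.fixedPoint_isFixedPt
  refine ⟨IccExtend le01 u₀, u₀.continuous.Icc_extend'.continuousOn, ?_⟩
  intro t ht
  -- Rewrite `fracOp` applied to the extension as `op u₀`.
  have hcrew : (∫ s in (0:ℝ)..1, ∫ m in (0:ℝ)..s,
      (s - m) ^ (ζ - 1) * h m (IccExtend le01 u₀ m)) = c u₀ := by
    simp only [hcdef, hGdef]
    apply intervalIntegral.integral_congr
    intro s hs
    rw [uIcc_of_le le01] at hs
    apply intervalIntegral.integral_congr
    intro m hm
    rw [uIcc_of_le hs.1] at hm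
    dsimp only
    rw [hHeq u₀ m ⟨hm.1, hm.2.trans hs.2⟩]
  have heq1 : fracOp ζ h (IccExtend le01 u₀) t = op u₀ t := by
    unfold fracOp
    have hbody : (∫ s in (0:ℝ)..t, ((t - s) ^ (ζ - 1) * h s (IccExtend le01 u₀ s) +
        2 * t / Real.Gamma ζ *
          ∫ s in (0:ℝ)..1, ∫ m in (0:ℝ)..s, (s - m) ^ (ζ - 1) * h m (IccExtend le01 u₀ m))) =
        ∫ s in (0:ℝ)..t, ((t - s) ^ (ζ - 1) * H u₀ s + 2 * t / Real.Gamma ζ * c u₀) := by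
      apply intervalIntegral.integral_congr
      intro s hs
      rw [uIcc_of_le ht.1] at hs
      dsimp only
      rw [hcrew, hHeq u₀ s ⟨hs.1, hs.2.trans ht.2⟩]
    rw [hbody]
    have hker : Continuous fun s : ℝ => (t - s) ^ (ζ - 1) :=
      hcrp.comp (continuous_const.sub continuous_id)
    rw [intervalIntegral.integral_add (f := fun s => (t - s) ^ (ζ - 1) * H u₀ s)
      ((hker.mul (hHcont u₀)).intervalIntegrable _ _)
      (intervalIntegrable_const)]
    rw [intervalIntegral.integral_const, smul_eq_mul, sub_zero]
  rw [heq1]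
  have hval : op u₀ t = u₀ ⟨t, ht⟩ := by
    have := congrFun (congrArg (fun f : C(Icc (0:ℝ) 1, ℝ) => (f : Icc (0:ℝ) 1 → ℝ)) hfix) ⟨t, ht⟩
    exact this
  rw [hval, IccExtend_of_mem]
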